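/- Let n ≥ 2 be an integer and β > −(n−1)/2 a real number. Let f : (0,π) → ℝ be measurable such that θ ↦ f(θ)·(sin θ)^{n−2} is integrable on (0,π) and f(θ) = O(θ^{2β}) as θ → 0⁺. Then ⟨f⟩_{M_κ} = O(κ^{−β}) as κ → +∞. -/

import Mathlib

open MeasureTheory Real Filter Asymptotics

section Aux
open Set

private lemma gauss_scale {p c : ℝ} (hc : 0 < c) {κ : ℝ} (hκ : 0 < κ) :
    ∫ x in Ioi (0:ℝ), x ^ p * Real.exp (-(c*κ) * x^2)
      = κ ^ (-(p+1)/2) * ∫ x in Ioi (0:ℝ), x ^ p * Real.exp (-c * x^2) := by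
  have hs : (0:ℝ) < Real.sqrt κ := Real.sqrt_pos.mpr hκ
  have h := integral_comp_mul_left_Ioi (fun u => u ^ p * Real.exp (-c * u^2)) 0 hs
  simp only [mul_zero, smul_eq_mul] at h
  have h2 : ∫ x in Ioi (0:ℝ), (Real.sqrt κ * x) ^ p * Real.exp (-c * (Real.sqrt κ * x)^2)
      = Real.sqrt κ ^ p * ∫ x in Ioi (0:ℝ), x ^ p * Real.exp (-(c*κ) * x^2) := by
    rw [← integral_const_mul]
    apply setIntegral_congr_fun measurableSet_Ioi
    intro x hx
    have hx' : (0:ℝ) < x := hx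
    simp only [Real.mul_rpow hs.le hx'.le, mul_pow, Real.sq_sqrt hκ.le]
    ring_nf
  rw [h2] at h
  have hsp : (0:ℝ) < Real.sqrt κ ^ p := Real.rpow_pos_of_pos hs _
  have h3 : ∫ x in Ioi (0:ℝ), x ^ p * Real.exp (-(c*κ) * x^2)
      = (Real.sqrt κ ^ p)⁻¹ * ((Real.sqrt κ)⁻¹ * ∫ x in Ioi (0:ℝ), x ^ p * Real.exp (-c * x^2)) := by
    rw [← h]; field_simp
  rw [h3, Real.sqrt_eq_rpow, ← Real.rpow_mul hκ.le, ← Real.rpow_neg hκ.le,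
    ← Real.rpow_neg hκ.le, ← mul_assoc, ← Real.rpow_add hκ]
  ring_nf

private lemma numer_upper (m : ℕ) (β : ℝ) (hβ : -(((m:ℝ)+1)/2) < β) (f : ℝ → ℝ)
    (hint : IntegrableOn (fun θ => f θ * Real.sin θ ^ m) (Ioo 0 π))
    {δ C : ℝ} (hδ0 : 0 < δ) (hδ1 : δ ≤ 1) (hC : 0 ≤ C)
    (hfb : ∀ θ ∈ Ioo (0:ℝ) δ, |f θ| ≤ C * θ ^ (2*β))
    {κ : ℝ} (hκ1 : 1 ≤ κ) :
    ‖∫ θ in Ioo (0:ℝ) π, f θ * Real.exp (κ * Real.cos θ) * Real.sin θ ^ m‖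
      ≤ Real.exp κ * (C * (∫ u in Ioi (0:ℝ), u ^ (2*β+(m:ℝ)) * Real.exp (-(2/π^2) * u^2))
            * κ ^ (-(2*β+(m:ℝ)+1)/2))
        + Real.exp (κ * (1 - 2/π^2 * δ^2)) * (∫ θ in Ioo (0:ℝ) π, |f θ| * Real.sin θ ^ m) := by
  have hκ : (0:ℝ) ≤ κ := by linarith
  have hκ0 : (0:ℝ) < κ := by linarith
  have hpi : (3:ℝ) < π := pi_gt_three
  have hδπ : δ < π := by linarith
  set c : ℝ := 2/π^2 with hc_def
  have hc : 0 < c := by positivity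
  set p : ℝ := 2*β + (m:ℝ) with hp_def
  have hp : -1 < p := by rw [hp_def]; linarith
  -- integrability of the full integrand
  have hmble : AEStronglyMeasurable (fun θ : ℝ => Real.exp (κ * Real.cos θ))
      (volume.restrict (Ioo (0:ℝ) π)) :=
    (Real.continuous_exp.comp (continuous_const.mul Real.continuous_cos)).aestronglyMeasurable
  have hFint : IntegrableOn (fun θ : ℝ => f θ * Real.exp (κ * Real.cos θ) * Real.sin θ ^ m)
      (Ioo 0 π) := by
    have := Integrable.bdd_mul (c := Real.exp κ) hint hmble
      (ae_of_all _ fun x => by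
        rw [Real.norm_eq_abs, abs_of_nonneg (Real.exp_pos _).le]
        exact Real.exp_le_exp.2 (by nlinarith [Real.cos_le_one x]))
    exact IntegrableOn.congr_fun this (fun θ _ => by ring) measurableSet_Ioo
  -- nonnegative version G
  set G : ℝ → ℝ := fun θ => |f θ| * Real.exp (κ * Real.cos θ) * Real.sin θ ^ m with hG_def
  have hGint : IntegrableOn G (Ioo 0 π) := by
    refine IntegrableOn.congr_fun hFint.norm (fun θ hθ => ?_) measurableSet_Ioo
    have hs := Real.sin_nonneg_of_nonneg_of_le_pi hθ.1.le hθ.2.le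
    simp [hG_def, abs_mul, abs_of_nonneg (Real.exp_pos _).le, abs_of_nonneg hs, abs_pow]
  have hnorm : ‖∫ θ in Ioo (0:ℝ) π, f θ * Real.exp (κ * Real.cos θ) * Real.sin θ ^ m‖
      ≤ ∫ θ in Ioo (0:ℝ) π, G θ := by
    refine le_trans (norm_integral_le_integral_norm _) (le_of_eq ?_)
    refine setIntegral_congr_fun measurableSet_Ioo (fun θ hθ => ?_)
    have hs := Real.sin_nonneg_of_nonneg_of_le_pi hθ.1.le hθ.2.le
    simp [hG_def, Real.norm_eq_abs, abs_mul, abs_of_nonneg (Real.exp_pos _).le,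
      abs_of_nonneg hs, abs_pow]
  -- split the domain
  have hdisj : Disjoint (Ioo (0:ℝ) δ) (Ico δ π) := by
    rw [Set.disjoint_left]
    intro x hx hx'
    exact absurd hx'.1 (not_le.2 hx.2)
  have hsplit : (∫ θ in Ioo (0:ℝ) π, G θ)
      = (∫ θ in Ioo (0:ℝ) δ, G θ) + ∫ θ in Ico δ π, G θ := by
    rw [← Ioo_union_Ico_eq_Ioo hδ0 hδπ.le]
    exact setIntegral_union hdisj measurableSet_Ico
      (hGint.mono_set (Ioo_subset_Ioo_right hδπ.le))
      (hGint.mono_set (fun x hx => ⟨lt_of_lt_of_le hδ0 hx.1, hx.2⟩))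
  -- part 1
  have hRint : IntegrableOn (fun θ : ℝ => C * Real.exp κ * (θ ^ p * Real.exp (-(c*κ) * θ^2)))
      (Ioo 0 δ) := by
    exact (((integrableOn_rpow_mul_exp_neg_mul_sq (by positivity) hp).mono_set
      (fun x hx => hx.1)).const_mul _)
  have hpart1 : (∫ θ in Ioo (0:ℝ) δ, G θ)
      ≤ ∫ θ in Ioo (0:ℝ) δ, C * Real.exp κ * (θ ^ p * Real.exp (-(c*κ) * θ^2)) := by
    refine setIntegral_mono_on (hGint.mono_set (Ioo_subset_Ioo_right hδπ.le)) hRint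
      measurableSet_Ioo (fun θ hθ => ?_)
    have hθ0 : (0:ℝ) < θ := hθ.1
    have hθδ : θ < δ := hθ.2
    have hθπ : θ ≤ π := by linarith
    have hsin : Real.sin θ ^ m ≤ θ ^ m :=
      pow_le_pow_left₀ (Real.sin_nonneg_of_nonneg_of_le_pi hθ0.le hθπ) (Real.sin_le hθ0.le) m
    have hsin0 : 0 ≤ Real.sin θ ^ m :=
      pow_nonneg (Real.sin_nonneg_of_nonneg_of_le_pi hθ0.le hθπ) m
    have hcos : Real.cos θ ≤ 1 - c * θ^2 := by
      rw [hc_def]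
      exact Real.cos_le_one_sub_mul_cos_sq (by rw [abs_of_nonneg hθ0.le]; linarith)
    have hexp : Real.exp (κ * Real.cos θ) ≤ Real.exp κ * Real.exp (-(c*κ) * θ^2) := by
      rw [← Real.exp_add]
      exact Real.exp_le_exp.2 (by nlinarith)
    have hf := hfb θ hθ
    have hrp : θ ^ (2*β) * θ ^ m = θ ^ p := by
      rw [hp_def, ← Real.rpow_natCast θ m, ← Real.rpow_add hθ0]
    calc G θ = |f θ| * (Real.exp (κ * Real.cos θ) * Real.sin θ ^ m) := by
          rw [hG_def]; ring
      _ ≤ (C * θ ^ (2*β)) * ((Real.exp κ * Real.exp (-(c*κ) * θ^2)) * θ ^ m) := by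
          refine mul_le_mul hf ?_ (by positivity) (by positivity)
          exact mul_le_mul hexp hsin hsin0 (by positivity)
      _ = C * Real.exp κ * (θ ^ (2*β) * θ ^ m * Real.exp (-(c*κ) * θ^2)) := by ring
      _ = C * Real.exp κ * (θ ^ p * Real.exp (-(c*κ) * θ^2)) := by rw [hrp]
  have hpart1' : (∫ θ in Ioo (0:ℝ) δ, C * Real.exp κ * (θ ^ p * Real.exp (-(c*κ) * θ^2)))
      ≤ C * Real.exp κ * (κ ^ (-(p+1)/2) *
          ∫ u in Ioi (0:ℝ), u ^ p * Real.exp (-c * u^2)) := by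
    rw [MeasureTheory.integral_const_mul, ← gauss_scale hc hκ0]
    refine mul_le_mul_of_nonneg_left ?_ (by positivity)
    refine setIntegral_mono_set ((integrableOn_rpow_mul_exp_neg_mul_sq (by positivity) hp))
      ?_ (HasSubset.Subset.eventuallyLE (fun x hx => hx.1))
    refine (ae_restrict_iff' measurableSet_Ioi).2 (ae_of_all _ (fun x hx => ?_))
    have : (0:ℝ) < x := hx
    positivity
  -- part 2
  have hAint : IntegrableOn (fun θ : ℝ => |f θ| * Real.sin θ ^ m) (Ioo 0 π) := by
    refine IntegrableOn.congr_fun hint.norm (fun θ hθ => ?_) measurableSet_Ioo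
    have hs := Real.sin_nonneg_of_nonneg_of_le_pi hθ.1.le hθ.2.le
    simp [Real.norm_eq_abs, abs_mul, abs_of_nonneg hs, abs_pow]
  have hpart2 : (∫ θ in Ico δ π, G θ)
      ≤ Real.exp (κ * (1 - c * δ^2)) * ∫ θ in Ioo (0:ℝ) π, |f θ| * Real.sin θ ^ m := by
    have hIcosub : Ico δ π ⊆ Ioo (0:ℝ) π := fun x hx => ⟨lt_of_lt_of_le hδ0 hx.1, hx.2⟩
    have hcosδ : Real.cos δ ≤ 1 - c * δ^2 := by
      rw [hc_def]
      exact Real.cos_le_one_sub_mul_cos_sq (by rw [abs_of_nonneg hδ0.le]; linarith)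
    calc (∫ θ in Ico δ π, G θ)
        ≤ ∫ θ in Ico δ π, Real.exp (κ * (1 - c * δ^2)) * (|f θ| * Real.sin θ ^ m) := by
          refine setIntegral_mono_on (hGint.mono_set hIcosub)
            ((hAint.mono_set hIcosub).const_mul _) measurableSet_Ico (fun θ hθ => ?_)
          have hθ0 : (0:ℝ) < θ := lt_of_lt_of_le hδ0 hθ.1
          have hsin0 : 0 ≤ Real.sin θ ^ m :=
            pow_nonneg (Real.sin_nonneg_of_nonneg_of_le_pi hθ0.le hθ.2.le) m
          have hcos : Real.cos θ ≤ Real.cos δ :=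
            Real.cos_le_cos_of_nonneg_of_le_pi hδ0.le hθ.2.le hθ.1
          have hexp : Real.exp (κ * Real.cos θ) ≤ Real.exp (κ * (1 - c * δ^2)) :=
            Real.exp_le_exp.2 (by nlinarith)
          calc G θ = Real.exp (κ * Real.cos θ) * (|f θ| * Real.sin θ ^ m) := by
                rw [hG_def]; ring
            _ ≤ Real.exp (κ * (1 - c * δ^2)) * (|f θ| * Real.sin θ ^ m) :=
                mul_le_mul_of_nonneg_right hexp (by positivity)
      _ = Real.exp (κ * (1 - c * δ^2)) * ∫ θ in Ico δ π, |f θ| * Real.sin θ ^ m := by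
          rw [MeasureTheory.integral_const_mul]
      _ ≤ Real.exp (κ * (1 - c * δ^2)) * ∫ θ in Ioo (0:ℝ) π, |f θ| * Real.sin θ ^ m := by
          refine mul_le_mul_of_nonneg_left ?_ (Real.exp_pos _).le
          refine setIntegral_mono_set hAint ?_ (HasSubset.Subset.eventuallyLE hIcosub)
          refine (ae_restrict_iff' measurableSet_Ioo).2 (ae_of_all _ (fun θ hθ => ?_))
          have hs := Real.sin_nonneg_of_nonneg_of_le_pi hθ.1.le hθ.2.le
          positivity
  calc ‖∫ θ in Ioo (0:ℝ) π, f θ * Real.exp (κ * Real.cos θ) * Real.sin θ ^ m‖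
      ≤ ∫ θ in Ioo (0:ℝ) π, G θ := hnorm
    _ = (∫ θ in Ioo (0:ℝ) δ, G θ) + ∫ θ in Ico δ π, G θ := hsplit
    _ ≤ C * Real.exp κ * (κ ^ (-(p+1)/2) * ∫ u in Ioi (0:ℝ), u ^ p * Real.exp (-c * u^2))
        + Real.exp (κ * (1 - c * δ^2)) * ∫ θ in Ioo (0:ℝ) π, |f θ| * Real.sin θ ^ m :=
      add_le_add (le_trans hpart1 hpart1') hpart2
    _ = _ := by ring

private lemma denom_lower (m : ℕ) {κ : ℝ} (hκ : 1 ≤ κ) :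
    Real.exp κ * (Real.exp (-(1:ℝ)/2) * (2/π)^m / (m+1)) * κ ^ (-((m:ℝ)+1)/2)
      ≤ ∫ θ in Ioo (0:ℝ) π, Real.exp (κ * Real.cos θ) * Real.sin θ ^ m := by
  have hκ0 : (0:ℝ) < κ := lt_of_lt_of_le one_pos hκ
  set a : ℝ := κ ^ (-(1:ℝ)/2) with ha_def
  have ha0 : 0 < a := Real.rpow_pos_of_pos hκ0 _
  have ha1 : a ≤ 1 := Real.rpow_le_one_of_one_le_of_nonpos hκ (by norm_num)
  have hpi : (3:ℝ) < π := pi_gt_three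
  have hapi2 : a ≤ π / 2 := by linarith
  have hapi : a < π := by linarith
  have hka : κ * a ^ 2 = 1 := by
    have h2 : a ^ 2 = κ⁻¹ := by
      rw [ha_def, ← Real.rpow_natCast (κ ^ (-(1:ℝ)/2)) 2, ← Real.rpow_mul hκ0.le]
      norm_num [Real.rpow_neg_one]
    rw [h2, mul_inv_cancel₀ hκ0.ne']
  have hg_cont : Continuous fun θ : ℝ => Real.exp (κ * Real.cos θ) * Real.sin θ ^ m := by
    fun_prop
  have hg_int : IntegrableOn (fun θ : ℝ => Real.exp (κ * Real.cos θ) * Real.sin θ ^ m)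
      (Ioo 0 π) := (hg_cont.continuousOn.integrableOn_Icc).mono_set Ioo_subset_Icc_self
  have hg_nonneg : ∀ θ ∈ Ioo (0:ℝ) π, 0 ≤ Real.exp (κ * Real.cos θ) * Real.sin θ ^ m := by
    intro θ hθ
    have := Real.sin_nonneg_of_nonneg_of_le_pi hθ.1.le hθ.2.le
    positivity
  have step1 : (∫ θ in Ioo (0:ℝ) a, Real.exp (κ * Real.cos θ) * Real.sin θ ^ m)
      ≤ ∫ θ in Ioo (0:ℝ) π, Real.exp (κ * Real.cos θ) * Real.sin θ ^ m := by
    refine setIntegral_mono_set hg_int ?_ (HasSubset.Subset.eventuallyLE (Ioo_subset_Ioo_right hapi.le))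
    exact (ae_restrict_iff' measurableSet_Ioo).2 (ae_of_all _ hg_nonneg)
  have step2 : (∫ θ in Ioo (0:ℝ) a, Real.exp κ * Real.exp (-(1:ℝ)/2) * (2/π)^m * θ ^ m)
      ≤ ∫ θ in Ioo (0:ℝ) a, Real.exp (κ * Real.cos θ) * Real.sin θ ^ m := by
    refine setIntegral_mono_on ?_ (hg_int.mono_set (Ioo_subset_Ioo_right hapi.le))
      measurableSet_Ioo ?_
    · exact ((Continuous.continuousOn (by fun_prop)).integrableOn_Icc).mono_set Ioo_subset_Icc_self
    · intro θ hθ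
      have hθ0 : 0 < θ := hθ.1
      have hθa : θ < a := hθ.2
      have h1 : (2/π) * θ ≤ Real.sin θ := Real.mul_le_sin hθ0.le (by linarith)
      have h1' : (2/π)^m * θ^m ≤ Real.sin θ ^ m := by
        rw [← mul_pow]; exact pow_le_pow_left₀ (by positivity) h1 m
      have h2 : Real.exp κ * Real.exp (-(1:ℝ)/2) ≤ Real.exp (κ * Real.cos θ) := by
        rw [← Real.exp_add]
        apply Real.exp_le_exp.2
        have hcos : 1 - θ^2/2 ≤ Real.cos θ := Real.one_sub_sq_div_two_le_cos
        have hθ2 : κ * θ^2 ≤ 1 := by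
          have : θ^2 ≤ a^2 := by nlinarith
          nlinarith
        nlinarith [Real.exp_pos κ]
      calc Real.exp κ * Real.exp (-(1:ℝ)/2) * (2/π)^m * θ ^ m
          = (Real.exp κ * Real.exp (-(1:ℝ)/2)) * ((2/π)^m * θ ^ m) := by ring
        _ ≤ Real.exp (κ * Real.cos θ) * Real.sin θ ^ m :=
            mul_le_mul h2 h1' (by positivity) (Real.exp_pos _).le
  have step3 : (∫ θ in Ioo (0:ℝ) a, Real.exp κ * Real.exp (-(1:ℝ)/2) * (2/π)^m * θ ^ m)
      = Real.exp κ * Real.exp (-(1:ℝ)/2) * (2/π)^m * (a ^ (m+1) / (m+1)) := by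
    rw [MeasureTheory.integral_const_mul, ← integral_Ioc_eq_integral_Ioo,
      ← intervalIntegral.integral_of_le ha0.le, integral_pow]
    norm_num
  have ha_pow : a ^ (m+1) = κ ^ (-((m:ℝ)+1)/2) := by
    rw [ha_def, ← Real.rpow_natCast (κ ^ (-(1:ℝ)/2)) (m+1), ← Real.rpow_mul hκ0.le]
    congr 1
    push_cast
    ring
  calc Real.exp κ * (Real.exp (-(1:ℝ)/2) * (2/π)^m / (m+1)) * κ ^ (-((m:ℝ)+1)/2)
      = Real.exp κ * Real.exp (-(1:ℝ)/2) * (2/π)^m * (a ^ (m+1) / (m+1)) := by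
        rw [ha_pow]; ring
    _ ≤ _ := by rw [← step3]; exact le_trans step2 step1

end Aux

open Set

set_option maxHeartbeats 1000000

/-- The average `⟨f⟩_{M_κ}` of a function `f` on `(0,π)` against the density
`e^{κ cos θ} sin^{n−2} θ`. -/
noncomputable def sphAvg (n : ℕ) (f : ℝ → ℝ) (κ : ℝ) : ℝ :=
  (∫ θ in Set.Ioo 0 π, f θ * Real.exp (κ * Real.cos θ) * Real.sin θ ^ (n - 2)) /
  (∫ θ in Set.Ioo 0 π, Real.exp (κ * Real.cos θ) * Real.sin θ ^ (n - 2))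

/-- If `f(θ) = O(θ^{2β})` as `θ → 0⁺` and `f · sin^{n−2}` is integrable on `(0,π)`,
then `⟨f⟩_{M_κ} = O(κ^{−β})` as `κ → ∞`. -/
theorem sphAvg_isBigO_atTop (n : ℕ) (hn : 2 ≤ n) (β : ℝ) (hβ : -(((n : ℝ) - 1) / 2) < β)
    (f : ℝ → ℝ) (hmeas : Measurable f)
    (hint : IntegrableOn (fun θ => f θ * Real.sin θ ^ (n - 2)) (Set.Ioo 0 π))
    (hasymp : f =O[nhdsWithin 0 (Set.Ioi 0)] fun θ : ℝ => θ ^ (2 * β)) :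
    (fun κ : ℝ => sphAvg n f κ) =O[atTop] fun κ : ℝ => κ ^ (-β) := by
  obtain ⟨m, rfl⟩ : ∃ m, n = m + 2 := ⟨n - 2, by omega⟩
  simp only [Nat.add_sub_cancel] at hint
  have hβ' : -(((m:ℝ)+1)/2) < β := by push_cast at hβ; linarith
  -- extract the bound near zero
  obtain ⟨C, hC0, hbound⟩ := hasymp.exists_nonneg
  rw [isBigOWith_iff, eventually_nhdsWithin_iff, Metric.eventually_nhds_iff] at hbound
  obtain ⟨δ', hδ'0, hδ'⟩ := hbound
  set δ : ℝ := min δ' 1 with hδ_def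
  have hδ0 : 0 < δ := lt_min hδ'0 one_pos
  have hδ1 : δ ≤ 1 := min_le_right _ _
  have hfb : ∀ θ ∈ Ioo (0:ℝ) δ, |f θ| ≤ C * θ ^ (2*β) := by
    intro θ hθ
    have h1 := hδ' (y := θ) (by
      rw [Real.dist_eq, sub_zero, abs_of_nonneg hθ.1.le]
      exact lt_of_lt_of_le hθ.2 (min_le_left _ _)) hθ.1
    rwa [Real.norm_eq_abs, Real.norm_eq_abs,
      abs_of_nonneg (Real.rpow_nonneg hθ.1.le _)] at h1
  -- constants
  have hpi : (3:ℝ) < π := pi_gt_three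
  set c : ℝ := 2/π^2 with hc_def
  have hc : 0 < c := by positivity
  set ε : ℝ := c * δ^2 with hε_def
  have hε : 0 < ε := by positivity
  set I : ℝ := ∫ u in Ioi (0:ℝ), u ^ (2*β+(m:ℝ)) * Real.exp (-c * u^2) with hI_def
  have hI0 : 0 ≤ I := by
    refine setIntegral_nonneg measurableSet_Ioi (fun x hx => ?_)
    have : (0:ℝ) < x := hx
    positivity
  set A : ℝ := ∫ θ in Ioo (0:ℝ) π, |f θ| * Real.sin θ ^ m with hA_def
  have hA0 : 0 ≤ A := by
    refine setIntegral_nonneg measurableSet_Ioo (fun θ hθ => ?_)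
    have hs := Real.sin_nonneg_of_nonneg_of_le_pi hθ.1.le hθ.2.le
    positivity
  set c₂ : ℝ := Real.exp (-(1:ℝ)/2) * (2/π)^m / (m+1) with hc₂_def
  have hc₂ : 0 < c₂ := by positivity
  set s : ℝ := ((m:ℝ)+1)/2 + β with hs_def
  set K : ℝ := (C * I + A) / c₂ with hK_def
  have hK0 : 0 ≤ K := div_nonneg (add_nonneg (mul_nonneg hC0 hI0) hA0) hc₂.le
  clear_value c δ ε I A c₂ s K
  -- eventual smallness of the exponential correction
  have hX : ∀ᶠ κ : ℝ in atTop, κ ^ s * Real.exp (-ε * κ) < 1 :=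
    (tendsto_rpow_mul_exp_neg_mul_atTop_nhds_zero s ε hε).eventually (gt_mem_nhds one_pos)
  rw [isBigO_iff]
  refine ⟨K, ?_⟩
  filter_upwards [eventually_ge_atTop 1, hX] with κ hκ1 hXκ
  have hκ0 : (0:ℝ) < κ := lt_of_lt_of_le one_pos hκ1
  -- denominator bound
  have hL : 0 < Real.exp κ * c₂ * κ ^ (-((m:ℝ)+1)/2) :=
    mul_pos (mul_pos (Real.exp_pos κ) hc₂) (Real.rpow_pos_of_pos hκ0 _)
  have hden := denom_lower m hκ1
  rw [← hc₂_def] at hden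
  have hD : 0 < ∫ θ in Ioo (0:ℝ) π, Real.exp (κ * Real.cos θ) * Real.sin θ ^ m :=
    lt_of_lt_of_le hL hden
  -- numerator bound
  have hnum := numer_upper m β hβ' f hint hδ0 hδ1 hC0 hfb hκ1
  rw [← hc_def, ← hI_def, ← hA_def] at hnum
  -- rpow gymnastics
  have hQP : κ ^ (-(2*β+(m:ℝ)+1)/2) = κ ^ (-β) * κ ^ (-(((m:ℝ)+1)/2)) := by
    rw [← Real.rpow_add hκ0]; congr 1; ring
  have hNs : κ ^ (-s) = κ ^ (-β) * κ ^ (-(((m:ℝ)+1)/2)) := by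
    rw [← Real.rpow_add hκ0]; congr 1; rw [hs_def]; ring
  have hss : κ ^ s * κ ^ (-s) = 1 := by
    rw [← Real.rpow_add hκ0, add_neg_cancel, Real.rpow_zero]
  have hXs : Real.exp (-(ε * κ)) ≤ κ ^ (-s) := by
    have h8 : 0 < κ ^ s := Real.rpow_pos_of_pos hκ0 s
    have h9 : κ ^ (-s) = (κ ^ s)⁻¹ := Real.rpow_neg hκ0.le s
    have hXκ' : κ ^ s * Real.exp (-(ε * κ)) < 1 := by
      have : -(ε * κ) = -ε * κ := (neg_mul ε κ).symm
      rw [this]; exact hXκ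
    have h10 : κ ^ s * (κ ^ s)⁻¹ = 1 := mul_inv_cancel₀ h8.ne'
    rw [h9]
    nlinarith [h10, hXκ', h8]
  have hexp' : Real.exp (κ * (1 - ε)) = Real.exp κ * Real.exp (-(ε * κ)) := by
    rw [← Real.exp_add]; congr 1; ring
  -- assemble: numerator ≤ K * κ^(-β) * L
  have hb : Real.exp (κ * (1 - ε)) * A
      ≤ (κ ^ (-β) * κ ^ (-(((m:ℝ)+1)/2))) * Real.exp κ * A := by
    rw [hexp', ← hNs]
    have h11 := mul_le_mul_of_nonneg_left hXs (Real.exp_pos κ).le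
    exact mul_le_mul_of_nonneg_right (by nlinarith) hA0
  have heq : Real.exp κ * (C * I * (κ ^ (-β) * κ ^ (-(((m:ℝ)+1)/2))))
        + (κ ^ (-β) * κ ^ (-(((m:ℝ)+1)/2))) * Real.exp κ * A
      = K * κ ^ (-β) * (Real.exp κ * c₂ * κ ^ (-((m:ℝ)+1)/2)) := by
    rw [hK_def]
    field_simp
  have hU : Real.exp κ * (C * I * κ ^ (-(2*β+(m:ℝ)+1)/2)) + Real.exp (κ * (1 - ε)) * A
      ≤ K * κ ^ (-β) * (Real.exp κ * c₂ * κ ^ (-((m:ℝ)+1)/2)) := by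
    rw [hQP, ← heq]
    linarith [hb]
  -- conclude
  have hεrw : κ * (1 - c * δ^2) = κ * (1 - ε) := by rw [hε_def]
  rw [hεrw] at hnum
  have hfinal : |sphAvg (m + 2) f κ| ≤ K * κ ^ (-β) := by
    have habs : |sphAvg (m + 2) f κ|
        = ‖∫ θ in Ioo (0:ℝ) π, f θ * Real.exp (κ * Real.cos θ) * Real.sin θ ^ m‖
          / ∫ θ in Ioo (0:ℝ) π, Real.exp (κ * Real.cos θ) * Real.sin θ ^ m := by
      rw [sphAvg, Nat.add_sub_cancel, abs_div, abs_of_pos hD, Real.norm_eq_abs]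
    rw [habs, div_le_iff₀ hD]
    calc ‖∫ θ in Ioo (0:ℝ) π, f θ * Real.exp (κ * Real.cos θ) * Real.sin θ ^ m‖
        ≤ Real.exp κ * (C * I * κ ^ (-(2*β+(m:ℝ)+1)/2)) + Real.exp (κ * (1 - ε)) * A := by
          exact le_trans hnum (le_of_eq (by ring))
      _ ≤ K * κ ^ (-β) * (Real.exp κ * c₂ * κ ^ (-((m:ℝ)+1)/2)) := hU
      _ ≤ K * κ ^ (-β) * ∫ θ in Ioo (0:ℝ) π, Real.exp (κ * Real.cos θ) * Real.sin θ ^ m := by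
          exact mul_le_mul_of_nonneg_left hden
            (mul_nonneg hK0 (Real.rpow_nonneg hκ0.le _))
  calc ‖sphAvg (m + 2) f κ‖ = |sphAvg (m + 2) f κ| := rfl
    _ ≤ K * κ ^ (-β) := hfinal
    _ = K * ‖κ ^ (-β)‖ := by
        rw [Real.norm_eq_abs, abs_of_nonneg (Real.rpow_nonneg hκ0.le _)]
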